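/- Let X be a non-empty compact topological space and f, v : X → R continuous with f* := max f. Suppose that for every x ∈ X with f(x) = f*, we have v(x) < 0. Then there exists ε > 0 such that max_{x∈X}(f(x) + ε·v(x)) < f*. -/

import Mathlib

theorem dec_max {X : Type*} [TopologicalSpace X] [CompactSpace X] [Nonempty X]
    (f v : X → ℝ) (hf : Continuous f) (hv : Continuous v)
    (fstar : ℝ) (hfstar : IsGreatest (Set.range f) fstar)
    (hneg : ∀ x, f x = fstar → v x < 0) :
    ∃ ε > 0, ∀ x, f x + ε * v x < fstar := by
  have hfle : ∀ x, f x ≤ fstar := fun x => hfstar.2 ⟨x, rfl⟩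
  -- bound on v
  obtain ⟨x0, -, hx0⟩ :=
    isCompact_univ.exists_isMaxOn Set.univ_nonempty hv.continuousOn
  set M : ℝ := max (v x0) 1 with hM
  have hM1 : (1 : ℝ) ≤ M := le_max_right _ _
  have hMpos : 0 < M := lt_of_lt_of_le one_pos hM1
  have hvM : ∀ x, v x ≤ M := fun x => (hx0 (Set.mem_univ x)).trans (le_max_left _ _)
  set K : Set X := {x | 0 ≤ v x} with hK
  have hKc : IsCompact K := (isClosed_le continuous_const hv).isCompact
  by_cases hKne : K.Nonempty
  · obtain ⟨x1, hx1K, hx1⟩ := hKc.exists_isMaxOn hKne hf.continuousOn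
    have hm : f x1 < fstar := by
      rcases lt_or_eq_of_le (hfle x1) with h | h
      · exact h
      · exact absurd (hneg x1 h) (not_lt.2 hx1K)
    have hεpos : 0 < (fstar - f x1) / (2 * M) := div_pos (by linarith) (by linarith)
    refine ⟨(fstar - f x1) / (2 * M), hεpos, fun x => ?_⟩
    by_cases hx : 0 ≤ v x
    · have h1 : f x ≤ f x1 := hx1 hx
      have h2 : (fstar - f x1) / (2 * M) * v x ≤ (fstar - f x1) / (2 * M) * M := by
        exact mul_le_mul_of_nonneg_left (hvM x) hεpos.le
      have h3 : (fstar - f x1) / (2 * M) * M = (fstar - f x1) / 2 := by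
        field_simp
      linarith
    · have : (fstar - f x1) / (2 * M) * v x < 0 := by
        exact mul_neg_of_pos_of_neg hεpos (not_le.1 hx)
      linarith [hfle x]
  · refine ⟨1, one_pos, fun x => ?_⟩
    have hx : v x < 0 := not_le.1 fun h => hKne ⟨x, h⟩
    rcases lt_or_eq_of_le (hfle x) with h | h
    · linarith
    · linarith [hneg x h]
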